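/- The graph whose vertices are the nonsingular symmetric 3×3 matrices over 𝔽₂, with A adjacent to B iff A ≠ B and A + B is singular, is strongly regular with parameters (28, 15, 6, 10). -/

import Mathlib

open Matrix

/-- The vertex set: nonsingular symmetric `3 × 3` matrices over `𝔽₂`. -/
abbrev NSym3 : Type := {M : Matrix (Fin 3) (Fin 3) (ZMod 2) // Mᵀ = M ∧ M.det ≠ 0}

/-- The graph on nonsingular symmetric `3 × 3` matrices over `𝔽₂`, with `A` adjacent
to `B` iff `A ≠ B` and `A + B` is singular. -/
def matrixGraph : SimpleGraph NSym3 where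
  Adj A B := A ≠ B ∧ (A.1 + B.1).det = 0
  symm := by
    constructor
    rintro A B ⟨h1, h2⟩
    exact ⟨h1.symm, by rwa [add_comm]⟩
  loopless := by constructor; rintro A ⟨h, -⟩; exact h rfl

instance : DecidableRel matrixGraph.Adj := fun A B =>
  inferInstanceAs (Decidable (A ≠ B ∧ (A.1 + B.1).det = 0))

set_option maxHeartbeats 40000000 in
/-- The graph on nonsingular symmetric `3 × 3` matrices over `𝔽₂`, adjacency
`A ≠ B` and `det (A + B) = 0`, is strongly regular with parameters `(28, 15, 6, 10)`. -/
theorem matrixGraph_isSRG : matrixGraph.IsSRGWith 28 15 6 10 := by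
  refine ⟨by decide, ?_, by decide, ?_⟩
  · show ∀ v, matrixGraph.degree v = 15
    decide
  · show ∀ v w : NSym3, v ≠ w → ¬matrixGraph.Adj v w →
      Fintype.card (matrixGraph.commonNeighbors v w) = 10
    decide
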